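/- (Ky Fan maximum principle) Let Σ be a real symmetric N×N matrix with eigenvalues λ_1 ≥ ⋯ ≥ λ_N. For any matrix A ∈ ℝ^{k×N} with orthonormal rows (A Aᵀ = I_k), trace(A Σ Aᵀ) ≤ λ_1 + ⋯ + λ_k, and equality holds when the rows of A are the top-k orthonormal eigenvectors of Σ. -/
import Mathlib


open Matrix Finset

lemma kyfan_filter_lt_eq_map (N k : ℕ) (hk : k ≤ N) :
    Finset.univ.filter (fun i : Fin N => (i : ℕ) < k)
      = Finset.univ.map (Fin.castLEEmb hk) := by
  ext i
  simp only [mem_filter, mem_univ, true_and, mem_map]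
  constructor
  · intro h
    exact ⟨⟨(i : ℕ), h⟩, by simp⟩
  · rintro ⟨j, rfl⟩
    simp [j.2]

lemma kyfan_sum_filter_lt_eq (N k : ℕ) (hk : k ≤ N) (f : Fin N → ℝ) :
    ∑ i ∈ Finset.univ.filter (fun i : Fin N => (i : ℕ) < k), f i
      = ∑ j : Fin k, f (Fin.castLE hk j) := by
  rw [kyfan_filter_lt_eq_map N k hk, Finset.sum_map]
  rfl

lemma kyfan_key_ineq (N k : ℕ) (hk : k ≤ N) (lam c : Fin N → ℝ) (hmono : Antitone lam)
    (hc0 : ∀ j, 0 ≤ c j) (hc1 : ∀ j, c j ≤ 1) (hsum : ∑ j, c j = (k : ℝ)) :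
    ∑ j, c j * lam j ≤ ∑ j ∈ Finset.univ.filter (fun j : Fin N => (j : ℕ) < k), lam j := by
  rcases Nat.eq_zero_or_pos k with hk0 | hkpos
  · subst hk0
    have hall : ∀ j ∈ (Finset.univ : Finset (Fin N)), c j = 0 := by
      intro j hj
      have := (Finset.sum_eq_zero_iff_of_nonneg (fun i _ => hc0 i)).mp (by simpa using hsum)
      exact this j hj
    rw [Finset.sum_eq_zero (fun j _ => by rw [hall j (mem_univ j), zero_mul])]
    have : Finset.univ.filter (fun j : Fin N => (j : ℕ) < 0) = ∅ := by
      simp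
    rw [this, Finset.sum_empty]
  · have hk1 : k - 1 < N := lt_of_lt_of_le (Nat.sub_lt hkpos one_pos) hk
    set t := lam ⟨k - 1, hk1⟩ with ht
    have hcard : ∑ j ∈ Finset.univ.filter (fun j : Fin N => (j : ℕ) < k), (1 : ℝ) = (k : ℝ) := by
      rw [kyfan_sum_filter_lt_eq N k hk]; simp
    have step1 : ∑ j, c j * lam j = (∑ j, c j * (lam j - t)) + (k : ℝ) * t := by
      rw [← hsum]
      rw [Finset.sum_mul, ← Finset.sum_add_distrib]
      congr 1; ext j; ring
    have step2 : ∑ j, c j * (lam j - t)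
        ≤ ∑ j : Fin N, (if (j : ℕ) < k then lam j - t else 0) := by
      apply Finset.sum_le_sum
      intro j _
      by_cases hj : (j : ℕ) < k
      · simp only [hj, if_true]
        have hle : lam j - t ≥ 0 := by
          have : j ≤ (⟨k - 1, hk1⟩ : Fin N) := by
            simp [Fin.le_def]; omega
          have := hmono this
          linarith
        nlinarith [hc1 j, hc0 j]
      · simp only [hj, if_false]
        have hge : lam j - t ≤ 0 := by
          have : (⟨k - 1, hk1⟩ : Fin N) ≤ j := by
            simp [Fin.le_def]; omega
          have := hmono this
          linarith
        nlinarith [hc0 j]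
    have step3 : ∑ j : Fin N, (if (j : ℕ) < k then lam j - t else 0)
        = ∑ j ∈ Finset.univ.filter (fun j : Fin N => (j : ℕ) < k), (lam j - t) := by
      rw [Finset.sum_filter]
    have step4 : ∑ j ∈ Finset.univ.filter (fun j : Fin N => (j : ℕ) < k), (lam j - t)
        = (∑ j ∈ Finset.univ.filter (fun j : Fin N => (j : ℕ) < k), lam j) - (k : ℝ) * t := by
      rw [Finset.sum_sub_distrib]
      congr 1
      rw [← hcard, Finset.sum_mul]
      simp
    linarith

lemma kyfan_trace_mid (N k : ℕ) (B : Matrix (Fin k) (Fin N) ℝ) (lam : Fin N → ℝ) :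
    Matrix.trace (B * Matrix.diagonal lam * Bᵀ) = ∑ j, (∑ i, (B i j) ^ 2) * lam j := by
  simp only [Matrix.trace, Matrix.diag, Matrix.mul_apply, Matrix.diagonal_apply,
    Matrix.transpose_apply, mul_ite, mul_zero, ite_mul, zero_mul, Finset.sum_ite_eq,
    Finset.sum_ite_eq']
  rw [Finset.sum_comm]
  congr 1
  ext j
  rw [Finset.sum_mul]
  congr 1
  ext i
  simp
  ring

lemma kyfan_sum_sq_eq_trace (N k : ℕ) (B : Matrix (Fin k) (Fin N) ℝ) :
    ∑ j, (∑ i, (B i j) ^ 2) = Matrix.trace (B * Bᵀ) := by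
  simp only [Matrix.trace, Matrix.diag, Matrix.mul_apply, Matrix.transpose_apply]
  rw [Finset.sum_comm]
  congr 1; ext j; congr 1; ext i; ring

lemma kyfan_col_bound (N k : ℕ) (B : Matrix (Fin k) (Fin N) ℝ) (hB : B * Bᵀ = 1) (j : Fin N) :
    ∑ i, (B i j) ^ 2 ≤ 1 := by
  set P := Bᵀ * B with hP
  have hPP : P * P = P := by
    rw [hP, Matrix.mul_assoc, ← Matrix.mul_assoc B, hB, Matrix.one_mul]
  have hdiag : P j j = ∑ i, (B i j) ^ 2 := by
    simp [hP, Matrix.mul_apply, sq]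
  have hsq : (P j j) ^ 2 ≤ P j j := by
    have h1 : P j j = ∑ i, (P j i) * (P i j) := by
      conv_lhs => rw [← hPP]
      simp [Matrix.mul_apply]
    have h2 : ∀ i, P j i = P i j := by
      intro i
      have : Pᵀ = P := by rw [hP, Matrix.transpose_mul, Matrix.transpose_transpose]
      calc P j i = Pᵀ i j := rfl
        _ = P i j := by rw [this]
    have h3 : P j j = ∑ i, (P i j) ^ 2 := by
      rw [h1]; congr 1; ext i; rw [h2 i]; ring
    calc (P j j) ^ 2 ≤ ∑ i, (P i j) ^ 2 :=
          Finset.single_le_sum (f := fun i => (P i j) ^ 2) (fun i _ => sq_nonneg _) (mem_univ j)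
      _ = P j j := h3.symm
  rw [← hdiag]
  nlinarith [hsq]

theorem ky_fan_maximum_principle (N k : ℕ) (hk : k ≤ N)
    (S U : Matrix (Fin N) (Fin N) ℝ) (lam : Fin N → ℝ)
    (hsym : S.IsSymm) (horth : Uᵀ * U = 1) (hmono : Antitone lam)
    (hspec : S = U * Matrix.diagonal lam * Uᵀ) :
    (∀ A : Matrix (Fin k) (Fin N) ℝ, A * Aᵀ = 1 →
        Matrix.trace (A * S * Aᵀ) ≤
          ∑ i ∈ Finset.univ.filter (fun i : Fin N => (i : ℕ) < k), lam i) ∧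
      Matrix.trace ((U.submatrix id (Fin.castLE hk))ᵀ * S * (U.submatrix id (Fin.castLE hk))) =
        ∑ i ∈ Finset.univ.filter (fun i : Fin N => (i : ℕ) < k), lam i := by
  have hUUT : U * Uᵀ = 1 := mul_eq_one_comm.mp horth
  constructor
  · intro A hA
    set B := A * U with hB
    have hBBT : B * Bᵀ = 1 := by
      rw [hB, Matrix.transpose_mul]
      calc A * U * (Uᵀ * Aᵀ) = A * (U * Uᵀ) * Aᵀ := by
            simp only [Matrix.mul_assoc]
        _ = 1 := by rw [hUUT, Matrix.mul_one, hA]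
    have htr : A * S * Aᵀ = B * Matrix.diagonal lam * Bᵀ := by
      rw [hspec, hB, Matrix.transpose_mul]
      simp only [Matrix.mul_assoc]
    rw [htr, kyfan_trace_mid]
    apply kyfan_key_ineq N k hk lam _ hmono
    · intro j
      exact Finset.sum_nonneg (fun i _ => sq_nonneg _)
    · intro j
      exact kyfan_col_bound N k B hBBT j
    · rw [kyfan_sum_sq_eq_trace, hBBT, Matrix.trace_one]
      simp
  · set V := U.submatrix id (Fin.castLE hk) with hV
    have h1 : Uᵀ * V = (1 : Matrix (Fin N) (Fin N) ℝ).submatrix id (Fin.castLE hk) := by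
      ext i j
      have h := congrFun (congrFun (congrArg (fun M => M) horth) i) (Fin.castLE hk j)
      simp only [Matrix.mul_apply, Matrix.submatrix_apply, id_eq, Matrix.transpose_apply] at h ⊢
      exact h
    have h2 : Vᵀ * S * V = (Uᵀ * V)ᵀ * Matrix.diagonal lam * (Uᵀ * V) := by
      rw [hspec, Matrix.transpose_mul, Matrix.transpose_transpose]
      simp only [Matrix.mul_assoc]
    rw [h2, h1, kyfan_sum_filter_lt_eq N k hk lam]
    simp [Matrix.trace, Matrix.diag, Matrix.mul_apply, Matrix.one_apply, Matrix.diagonal_apply]
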